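/- Let p₀ ∈ (1/2, 1], let q, q̃ ∈ [p₀, 1], and let m, m̃ be real numbers with |m + q − 1| ≤ 1. If |m̃ − m| ≤ δ and |q̃ − q| ≤ δ′, then |(m̃ + q̃ − 1)/(2q̃ − 1) − (m + q − 1)/(2q − 1)| ≤ 2δ′/(2p₀ − 1)² + (δ + δ′)/(2p₀ − 1). -/

import Mathlib

/-- Error-propagation lemma for the inversion formula `(m + q - 1)/(2q - 1)`:
errors `δ` on `m` and `δ'` on `q ≥ p₀ > 1/2` propagate to an error of at most
`2δ'/(2p₀-1)² + (δ + δ')/(2p₀-1)`. -/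
theorem stmt16 (p₀ q qt m mt δ δ' : ℝ) (hp₀ : p₀ ∈ Set.Ioc (1/2 : ℝ) 1)
    (hq : q ∈ Set.Icc p₀ 1) (hqt : qt ∈ Set.Icc p₀ 1)
    (hm : |m + q - 1| ≤ 1) (hδ : |mt - m| ≤ δ) (hδ' : |qt - q| ≤ δ') :
    |(mt + qt - 1)/(2*qt - 1) - (m + q - 1)/(2*q - 1)| ≤
      2*δ'/(2*p₀ - 1)^2 + (δ + δ')/(2*p₀ - 1) := by
  obtain ⟨hp₁, hp₂⟩ := hp₀
  have hc : 0 < 2*p₀ - 1 := by linarith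
  have hq1 : 2*p₀ - 1 ≤ 2*q - 1 := by linarith [hq.1]
  have hqt1 : 2*p₀ - 1 ≤ 2*qt - 1 := by linarith [hqt.1]
  have hq0 : 0 < 2*q - 1 := lt_of_lt_of_le hc hq1
  have hqt0 : 0 < 2*qt - 1 := lt_of_lt_of_le hc hqt1
  have heq : (mt + qt - 1)/(2*qt - 1) - (m + q - 1)/(2*q - 1)
      = ((mt - m) + (qt - q))/(2*qt - 1)
        + (m + q - 1) * (2*(q - qt)) / ((2*qt - 1)*(2*q - 1)) := by
    rw [div_add_div _ _ hqt0.ne' (mul_ne_zero hqt0.ne' hq0.ne'), div_sub_div _ _ hqt0.ne' hq0.ne', div_eq_div_iff (mul_ne_zero hqt0.ne' hq0.ne') (mul_ne_zero hqt0.ne' (mul_ne_zero hqt0.ne' hq0.ne'))]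
    ring
  rw [heq]
  have h1 : |((mt - m) + (qt - q))/(2*qt - 1)| ≤ (δ + δ')/(2*p₀ - 1) := by
    rw [abs_div, abs_of_pos hqt0]
    apply div_le_div₀ (by linarith [abs_nonneg (mt - m), abs_nonneg (qt - q)])
      ((abs_add_le _ _).trans (by linarith)) hc hqt1
  have h2 : |(m + q - 1) * (2*(q - qt)) / ((2*qt - 1)*(2*q - 1))|
      ≤ 2*δ'/(2*p₀ - 1)^2 := by
    rw [abs_div, abs_mul, abs_mul, abs_of_pos (by positivity : (0:ℝ) < (2*qt-1)*(2*q-1))]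
    have hd' : 0 ≤ δ' := le_trans (abs_nonneg _) hδ'
    have hn : |m + q - 1| * (|2| * |q - qt|) ≤ 2*δ' := by
      rw [abs_two, abs_sub_comm q qt]
      calc |m + q - 1| * (2 * |qt - q|) ≤ 1 * (2 * δ') := by
            apply mul_le_mul hm (by linarith) (by positivity) zero_le_one
        _ = 2*δ' := by ring
    have hden : (2*p₀ - 1)^2 ≤ (2*qt - 1)*(2*q - 1) := by
      rw [sq]
      exact mul_le_mul hqt1 hq1 hc.le hqt0.le
    exact div_le_div₀ (by positivity) hn (by positivity) hden
  calc |_ + _| ≤ _ := abs_add_le _ _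
    _ ≤ 2*δ'/(2*p₀ - 1)^2 + (δ + δ')/(2*p₀ - 1) := add_le_add h1 h2 |>.trans_eq (add_comm _ _)
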